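/- Let Φ : ℚ[K₁, K₂, G, X] → ℚ[t₁, t₂, r] be the ℚ-algebra homomorphism determined by K₁ ↦ −(t₁ + t₂), K₂ ↦ −(t₁² + t₂²), G ↦ (t₁ − r)(t₂ + r), and X ↦ r(t₁ − t₂). Then the kernel of Φ is the principal ideal generated by the polynomial (2X + (2K₂ + K₁²))² − (2K₂ + K₁²)(4G − K₁²). -/

import Mathlib

open MvPolynomial

noncomputable section KernelOfPhiAux

/-- `ψ : ℚ[K₁,K₂,G] → ℚ[t₁,t₂,r]`, the restriction of `Φ` to the first three variables. -/
def psiK : MvPolynomial (Fin 3) ℚ →ₐ[ℚ] MvPolynomial (Fin 3) ℚ :=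
  aeval ![-(X 0 + X 1), -(X 0 ^ 2 + X 1 ^ 2), (X 0 - X 2) * (X 1 + X 2)]

def chiK : MvPolynomial (Fin 3) ℚ →ₐ[ℚ] MvPolynomial (Fin 3) ℚ :=
  aeval ![X 0 ^ 2 + X 1, X 0 ^ 2 - X 1, X 1 - X 2]

def betaK : MvPolynomial (Fin 3) ℚ →ₐ[ℚ] MvPolynomial (Fin 3) ℚ :=
  aeval ![-2 * X 0, -2 * X 0 ^ 2 - 2 * X 1, X 0 ^ 2 - X 2]

def gammaK : MvPolynomial (Fin 3) ℚ →ₐ[ℚ] MvPolynomial (Fin 3) ℚ :=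
  aeval ![-(C (2⁻¹ : ℚ) * X 0), -(C (2⁻¹ : ℚ) * X 1) - C (4⁻¹ : ℚ) * X 0 ^ 2,
    C (4⁻¹ : ℚ) * X 0 ^ 2 - X 2]

lemma chi_comp_psi : chiK.comp psiK = (expand 2).comp betaK := by
  apply MvPolynomial.algHom_ext
  intro i
  fin_cases i <;> simp [chiK, psiK, betaK, map_ofNat, expand_X] <;> ring

lemma gamma_comp_beta : gammaK.comp betaK = AlgHom.id ℚ _ := by
  have hc2 : (C (2⁻¹:ℚ) : MvPolynomial (Fin 3) ℚ) * 2 = 1 := by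
    have h2 : (2 : MvPolynomial (Fin 3) ℚ) = C (2:ℚ) := by rw [map_ofNat]
    rw [h2, ← map_mul]; norm_num
  have hc4 : (C (2⁻¹:ℚ) : MvPolynomial (Fin 3) ℚ) ^ 2 = C (4⁻¹:ℚ) := by
    rw [← map_pow]; norm_num
  apply MvPolynomial.algHom_ext
  intro i
  fin_cases i <;> simp [betaK, gammaK, map_ofNat]
  · linear_combination (X 0 : MvPolynomial (Fin 3) ℚ) * hc2
  · linear_combination (X 1 : MvPolynomial (Fin 3) ℚ) * hc2 +
      (-2 * X 0 ^ 2 : MvPolynomial (Fin 3) ℚ) * hc4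
  · linear_combination (X 0 ^ 2 : MvPolynomial (Fin 3) ℚ) * hc4

lemma expand_two_monomial' (m : Fin 3 →₀ ℕ) (c : ℚ) :
    expand 2 (monomial m c) = monomial (2 • m) c := by
  rw [expand_monomial, monomial_eq, Finsupp.prod,
    Finsupp.support_smul_eq (by norm_num : (2:ℕ) ≠ 0)]

lemma coeff_expand_two (f : MvPolynomial (Fin 3) ℚ) (m : Fin 3 →₀ ℕ) :
    coeff (2 • m) (expand 2 f) = coeff m f := by
  induction f using MvPolynomial.induction_on' with
  | monomial m' c =>
    rw [expand_two_monomial', coeff_monomial, coeff_monomial]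
    have h : (2 • m' = 2 • m) ↔ m' = m := by
      constructor
      · intro h; ext i
        have h2 : (2 • m') i = (2 • m) i := by rw [h]
        simp only [Finsupp.smul_apply, smul_eq_mul] at h2
        omega
      · rintro rfl; rfl
    simp [h]
  | add p q hp hq => simp [map_add, hp, hq]

lemma expand_two_injective :
    Function.Injective (expand 2 : MvPolynomial (Fin 3) ℚ →ₐ[ℚ] MvPolynomial (Fin 3) ℚ) := by
  intro f g h
  ext m
  rw [← coeff_expand_two f m, ← coeff_expand_two g m, h]

lemma psiK_injective : Function.Injective psiK := by
  intro f g h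
  have h1 : ((expand 2).comp betaK) f = ((expand 2).comp betaK) g := by
    rw [← chi_comp_psi]; simp only [AlgHom.comp_apply, h]
  have h2 : betaK f = betaK g :=
    expand_two_injective (by simpa only [AlgHom.comp_apply] using h1)
  have h3 : (gammaK.comp betaK) f = (gammaK.comp betaK) g := by
    simp only [AlgHom.comp_apply, h2]
  simpa only [gamma_comp_beta, AlgHom.id_apply] using h3

def sigmaK : MvPolynomial (Fin 3) ℚ →ₐ[ℚ] MvPolynomial (Fin 3) ℚ :=
  aeval ![X 0, X 1, X 0 - X 1 - X 2]

lemma sigma_comp_psi : sigmaK.comp psiK = psiK := by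
  apply MvPolynomial.algHom_ext
  intro i
  fin_cases i <;> simp [sigmaK, psiK] <;> ring

lemma core_lemma (u v : MvPolynomial (Fin 3) ℚ)
    (h : psiK u + psiK v * (X 2 * (X 0 - X 1)) = 0) : u = 0 ∧ v = 0 := by
  have hσ := congrArg sigmaK h
  simp only [map_add, map_mul, map_sub, map_zero] at hσ
  rw [show sigmaK (psiK u) = psiK u from by
        rw [← AlgHom.comp_apply, sigma_comp_psi],
      show sigmaK (psiK v) = psiK v from by
        rw [← AlgHom.comp_apply, sigma_comp_psi]] at hσ
  simp only [sigmaK, aeval_X, Matrix.cons_val_zero, Matrix.cons_val_one,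
    Matrix.head_cons, Matrix.cons_val_two, Matrix.tail_cons] at hσ
  have hdiff : psiK v * ((X 0 - X 1) * (2 * X 2 - (X 0 - X 1))) = 0 := by
    linear_combination h - hσ
  have hne : ((X 0 - X 1) * (2 * X 2 - (X 0 - X 1)) : MvPolynomial (Fin 3) ℚ) ≠ 0 := by
    intro h0
    have h0' := congrArg (eval ![1, 0, 1]) h0
    simp at h0'
    norm_num at h0'
  have hv : psiK v = 0 := by
    rcases mul_eq_zero.mp hdiff with h' | h'
    · exact h'
    · exact absurd h' hne
  have hv0 : v = 0 := psiK_injective (by simpa using hv)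
  have hu : psiK u = 0 := by rw [hv0] at h; simpa using h
  exact ⟨psiK_injective (by simpa using hu), hv0⟩

/-- the variable-permuting equivalence `ℚ[K₁,K₂,G,X] ≃ (ℚ[K₁,K₂,G])[X]`. -/
def eqv : MvPolynomial (Fin 4) ℚ ≃ₐ[ℚ] Polynomial (MvPolynomial (Fin 3) ℚ) :=
  (renameEquiv ℚ (finRotate 4)).trans (MvPolynomial.finSuccEquiv ℚ 3)

lemma eqv_X3 : eqv (X 3) = Polynomial.X := by
  have h : finRotate 4 (3 : Fin 4) = 0 := by decide
  simp [eqv, h, finSuccEquiv_X_zero]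

lemma eqv_X0 : eqv (X 0) = Polynomial.C (X 0) := by
  have h : finRotate 4 (0 : Fin 4) = Fin.succ 0 := by decide
  simp only [eqv, AlgEquiv.trans_apply, renameEquiv_apply, rename_X, h]
  exact finSuccEquiv_X_succ

lemma eqv_X1 : eqv (X 1) = Polynomial.C (X 1) := by
  have h : finRotate 4 (1 : Fin 4) = Fin.succ 1 := by decide
  simp only [eqv, AlgEquiv.trans_apply, renameEquiv_apply, rename_X, h]
  exact finSuccEquiv_X_succ

lemma eqv_X2 : eqv (X 2) = Polynomial.C (X 2) := by
  have h : finRotate 4 (2 : Fin 4) = Fin.succ 2 := by decide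
  simp only [eqv, AlgEquiv.trans_apply, renameEquiv_apply, rename_X, h]
  exact finSuccEquiv_X_succ

lemma eqv_C (q : ℚ) : eqv (C q) = Polynomial.C (C q) := by
  have h1 : (C q : MvPolynomial (Fin 4) ℚ) = algebraMap ℚ _ q := rfl
  have h2 : (Polynomial.C (C q) : Polynomial (MvPolynomial (Fin 3) ℚ)) =
      algebraMap ℚ _ q := rfl
  rw [h1, h2, AlgEquiv.commutes]

end KernelOfPhiAux

/-- the generator polynomial -/
noncomputable def P4 : MvPolynomial (Fin 4) ℚ :=
  (2 * X 3 + (2 * X 1 + X 0 ^ 2)) ^ 2 - (2 * X 1 + X 0 ^ 2) * (4 * X 2 - X 0 ^ 2)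

noncomputable def A3 : MvPolynomial (Fin 3) ℚ := 2 * X 1 + X 0 ^ 2
noncomputable def B3 : MvPolynomial (Fin 3) ℚ := 4 * X 2 - X 0 ^ 2

lemma eqv_P4 : eqv P4 = Polynomial.C (A3 ^ 2 - A3 * B3) + Polynomial.C (4 * A3) * Polynomial.X
    + 4 * Polynomial.X ^ 2 := by
  simp only [P4, A3, B3, map_sub, map_add, map_mul, map_pow, map_ofNat,
    eqv_X0, eqv_X1, eqv_X2, eqv_X3]
  ring

noncomputable def MM : Polynomial (MvPolynomial (Fin 3) ℚ) :=
  Polynomial.C (C (4⁻¹ : ℚ)) * eqv P4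

lemma MM_coeff2 : MM.coeff 2 = 1 := by
  rw [MM, Polynomial.coeff_C_mul, eqv_P4]
  simp only [Polynomial.coeff_add, Polynomial.coeff_C, Polynomial.coeff_C_mul,
    Polynomial.coeff_X, Polynomial.coeff_X_pow, Polynomial.coeff_ofNat_mul]
  norm_num
  rw [show (4 : MvPolynomial (Fin 3) ℚ) = C (4:ℚ) from by rw [map_ofNat], ← map_mul]
  norm_num

lemma MM_degree_le : MM.degree ≤ 2 := by
  rw [MM]
  refine (Polynomial.degree_mul_le _ _).trans ?_
  have h1 : (Polynomial.C (C (4⁻¹:ℚ)) :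
      Polynomial (MvPolynomial (Fin 3) ℚ)).degree ≤ 0 := Polynomial.degree_C_le
  have h2 : (eqv P4).degree ≤ 2 := by
    rw [eqv_P4]
    compute_degree
  calc (Polynomial.C (C (4⁻¹:ℚ))).degree + (eqv P4).degree ≤ 0 + 2 := add_le_add h1 h2
    _ = 2 := by norm_num

lemma MM_monic : MM.Monic := Polynomial.monic_of_degree_le 2 MM_degree_le MM_coeff2

/-- Let `Φ : ℚ[K₁,K₂,G,X] → ℚ[t₁,t₂,r]` be the `ℚ`-algebra homomorphism determined by
`K₁ ↦ −(t₁+t₂)`, `K₂ ↦ −(t₁²+t₂²)`, `G ↦ (t₁−r)(t₂+r)`, `X ↦ r(t₁−t₂)` (with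
`K₁ = X 0, K₂ = X 1, G = X 2, X = X 3` and `t₁ = X 0, t₂ = X 1, r = X 2`).  Then the
kernel of `Φ` is the principal ideal generated by
`(2X + (2K₂ + K₁²))² − (2K₂ + K₁²)(4G − K₁²)`. -/
theorem kernel_of_Phi
    (Φ : MvPolynomial (Fin 4) ℚ →ₐ[ℚ] MvPolynomial (Fin 3) ℚ)
    (hΦ : Φ = aeval ![-(X 0 + X 1 : MvPolynomial (Fin 3) ℚ),
        -(X 0 ^ 2 + X 1 ^ 2), (X 0 - X 2) * (X 1 + X 2), X 2 * (X 0 - X 1)]) :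
    RingHom.ker Φ.toRingHom = Ideal.span
      {(2 * X 3 + (2 * X 1 + X 0 ^ 2)) ^ 2 -
        (2 * X 1 + X 0 ^ 2) * (4 * X 2 - X 0 ^ 2)} := by
  have hP4 : ((2 * X 3 + (2 * X 1 + X 0 ^ 2)) ^ 2 -
      (2 * X 1 + X 0 ^ 2) * (4 * X 2 - X 0 ^ 2) : MvPolynomial (Fin 4) ℚ) = P4 := rfl
  rw [hP4]
  have hPhiP : Φ P4 = 0 := by
    rw [hΦ, P4]
    simp only [map_sub, map_add, map_mul, map_pow, map_ofNat, aeval_X,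
      Matrix.cons_val_zero, Matrix.cons_val_one, Matrix.head_cons,
      Matrix.cons_val_two, Matrix.tail_cons, Matrix.cons_val_three]
    ring
  have hspan_le : Ideal.span {P4} ≤ RingHom.ker Φ.toRingHom := by
    rw [Ideal.span_le, Set.singleton_subset_iff]
    simpa [RingHom.mem_ker] using hPhiP
  refine le_antisymm ?_ hspan_le
  intro f hf
  rw [RingHom.mem_ker] at hf
  have hf' : Φ f = 0 := hf
  -- divide eqv f by MM
  have hdiv : eqv f %ₘ MM + MM * (eqv f /ₘ MM) = eqv f :=
    Polynomial.modByMonic_add_div (eqv f) MM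
  set rem : Polynomial (MvPolynomial (Fin 3) ℚ) := eqv f %ₘ MM with hremdef
  have hremdeg : rem.degree ≤ 1 := by
    have hlt : rem.degree < 2 :=
      lt_of_lt_of_le (Polynomial.degree_modByMonic_lt (eqv f) MM_monic) MM_degree_le
    rcases h : rem.degree with _ | n
    · exact bot_le
    · rw [h, WithBot.some_eq_coe,
        show (2 : WithBot ℕ) = ((2:ℕ) : WithBot ℕ) from rfl] at hlt
      have h2 : n < 2 := WithBot.coe_lt_coe.mp hlt
      have h3 : n ≤ 1 := by omega
      rw [WithBot.some_eq_coe, show (1 : WithBot ℕ) = ((1:ℕ) : WithBot ℕ) from rfl]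
      exact WithBot.coe_le_coe.mpr h3
  have hrem : rem = Polynomial.C (rem.coeff 1) * Polynomial.X + Polynomial.C (rem.coeff 0) :=
    Polynomial.eq_X_add_C_of_degree_le_one hremdeg
  -- f - eqv.symm rem ∈ span {P4}
  have heqvsymmMM : eqv.symm MM = C (4⁻¹ : ℚ) * P4 := by
    rw [MM, ← eqv_C 4⁻¹, ← map_mul]
    exact eqv.symm_apply_apply _
  have hfM : f - eqv.symm rem ∈ Ideal.span {P4} := by
    rw [Ideal.mem_span_singleton]
    refine ⟨C (4⁻¹ : ℚ) * eqv.symm (eqv f /ₘ MM), ?_⟩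
    have h1 : f - eqv.symm rem = eqv.symm (MM * (eqv f /ₘ MM)) := by
      conv_lhs => rw [← eqv.symm_apply_apply f, ← hdiv]
      rw [map_add]
      ring
    rw [h1, map_mul, heqvsymmMM]
    ring
  -- hence Φ kills eqv.symm rem
  have hrem0 : Φ (eqv.symm rem) = 0 := by
    have hmem := hspan_le hfM
    rw [RingHom.mem_ker] at hmem
    have hmem' : Φ (f - eqv.symm rem) = 0 := hmem
    rw [map_sub, hf', zero_sub, neg_eq_zero] at hmem'
    exact hmem'
  -- facts about eqv.symm
  have hsymm0 : eqv.symm (Polynomial.C (X 0)) = (X 0 : MvPolynomial (Fin 4) ℚ) := by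
    rw [← eqv_X0, AlgEquiv.symm_apply_apply]
  have hsymm1 : eqv.symm (Polynomial.C (X 1)) = (X 1 : MvPolynomial (Fin 4) ℚ) := by
    rw [← eqv_X1, AlgEquiv.symm_apply_apply]
  have hsymm2 : eqv.symm (Polynomial.C (X 2)) = (X 2 : MvPolynomial (Fin 4) ℚ) := by
    rw [← eqv_X2, AlgEquiv.symm_apply_apply]
  have hsymmX : eqv.symm Polynomial.X = (X 3 : MvPolynomial (Fin 4) ℚ) := by
    rw [← eqv_X3, AlgEquiv.symm_apply_apply]
  -- identify Φ ∘ eqv.symm ∘ C with psiK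
  have hcomp : ∀ c : MvPolynomial (Fin 3) ℚ, Φ (eqv.symm (Polynomial.C c)) = psiK c := by
    intro c
    have heq : (Φ.comp ((eqv.symm : Polynomial (MvPolynomial (Fin 3) ℚ) ≃ₐ[ℚ]
        MvPolynomial (Fin 4) ℚ).toAlgHom.comp (Polynomial.CAlgHom))) = psiK := by
      apply MvPolynomial.algHom_ext
      intro i
      fin_cases i <;>
        simp [Polynomial.CAlgHom, hsymm0, hsymm1, hsymm2, hΦ, psiK]
    have := AlgHom.congr_fun heq c
    simpa [Polynomial.CAlgHom] using this
  -- compute Φ (eqv.symm rem)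
  have hPhiX3 : Φ (X 3) = X 2 * (X 0 - X 1) := by
    rw [hΦ]; simp
  have hfinal : psiK (rem.coeff 0) + psiK (rem.coeff 1) * (X 2 * (X 0 - X 1)) = 0 := by
    rw [← hrem0]
    conv_rhs => rw [hrem]
    rw [map_add, map_mul, hsymmX, map_add, map_mul, hcomp, hcomp, hPhiX3]
    ring
  obtain ⟨hc0, hc1⟩ := core_lemma (rem.coeff 0) (rem.coeff 1) hfinal
  have hrem_zero : rem = 0 := by rw [hrem, hc0, hc1]; simp
  have : f - eqv.symm rem = f := by rw [hrem_zero]; simp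
  rwa [this] at hfM
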